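/- Let S₁,…,S_d be pairwise commuting Hermitian N×N complex matrices such that every eigenvalue of S_k lies in [μ_k, ν_k] for each k = 1,…,d, let h be a real multivariate polynomial with h(t) ≠ 0 for every t in the cube [μ,ν] = [μ₁,ν₁]×⋯×[μ_d,ν_d], let C_M be the Chebyshev interpolation polynomial of degree at most M in each variable interpolating 1/h at the tensor grid of rescaled Chebyshev points of [μ,ν], and set H = h(S₁,…,S_d), C = C_M(S₁,…,S_d) and b̃_M = sup_{t∈[μ,ν]} |1 − h(t)C_M(t)|. If b̃_M < 1, then H is invertible and for every vector y ∈ ℂ^N, every initial vector x⁽⁰⁾ ∈ ℂ^N, and every r with ρ(I − C·H) < r < 1 (where ρ denotes spectral radius), there exists a constant C' > 0 such that the iterates defined by x⁽ᵐ⁾ = x⁽ᵐ⁻¹⁾ − C·(H x⁽ᵐ⁻¹⁾ − y) satisfy ‖x⁽ᵐ⁾ − H⁻¹y‖₂ ≤ C' r^m ‖x⁽⁰⁾ − H⁻¹y‖₂ for all m ≥ 0. In particular x⁽ᵐ⁾ converges exponentially to H⁻¹y. -/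

import Mathlib

open Matrix

/-- Rescaled Chebyshev point of order `M` in `[μ, ν]`. -/
noncomputable def chebPt (M : ℕ) (μ ν : ℝ) (j : ℕ) : ℝ :=
  (ν + μ) / 2 + (ν - μ) / 2 * Real.cos (((j : ℝ) + 1 / 2) * Real.pi / ((M : ℝ) + 1))

/-- Multivariate Lagrange basis polynomial at the tensor grid of rescaled Chebyshev points. -/
noncomputable def lagrangeBasisMv (d M : ℕ) (μ ν : Fin d → ℝ) (j : Fin d → Fin (M + 1)) :
    MvPolynomial (Fin d) ℝ :=
  ∏ k : Fin d, ∏ i ∈ Finset.univ.erase (j k),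
    MvPolynomial.C (chebPt M (μ k) (ν k) (j k : ℕ) - chebPt M (μ k) (ν k) (i : ℕ))⁻¹ *
      (MvPolynomial.X k - MvPolynomial.C (chebPt M (μ k) (ν k) (i : ℕ)))

/-- Chebyshev interpolation polynomial of `1/h` on the cube `[μ, ν]` of order `M`. -/
noncomputable def chebInterp (d M : ℕ) (μ ν : Fin d → ℝ) (h : MvPolynomial (Fin d) ℝ) :
    MvPolynomial (Fin d) ℝ :=
  ∑ j : Fin d → Fin (M + 1),
    MvPolynomial.C (MvPolynomial.eval (fun k => chebPt M (μ k) (ν k) (j k : ℕ)) h)⁻¹ *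
      lagrangeBasisMv d M μ ν j
/-- Evaluation of a real multivariate polynomial at a `d`-tuple of `N × N` complex matrices:
`p(S₁, …, S_d) = Σ p_{l₁,…,l_d} S₁^{l₁} ⋯ S_d^{l_d}`. -/
noncomputable def mvEvalMat {d N : ℕ} (p : MvPolynomial (Fin d) ℝ)
    (S : Fin d → Matrix (Fin N) (Fin N) ℂ) : Matrix (Fin N) (Fin N) ℂ :=
  ∑ m ∈ p.support, (Complex.ofReal (p.coeff m)) • (List.ofFn fun k => S k ^ m k).prod
/-- Spectral radius of a square complex matrix: the maximum modulus of its eigenvalues. -/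
noncomputable def specRad {N : ℕ} (A : Matrix (Fin N) (Fin N) ℂ) : ℝ :=
  sSup ((fun z : ℂ => ‖z‖) '' spectrum ℂ A)
/-- Euclidean norm on `ℂ^N`. -/
noncomputable def enorm2 {N : ℕ} (x : Fin N → ℂ) : ℝ :=
  Real.sqrt (∑ i, ‖x i‖ ^ 2)
/-- The maximal approximation error `b̃_M = sup_{t ∈ [μ,ν]} |1 - h(t) C_M(t)|`. -/
noncomputable def bTilde (d M : ℕ) (μ ν : Fin d → ℝ) (h : MvPolynomial (Fin d) ℝ) : ℝ :=
  sSup ((fun t => |1 - MvPolynomial.eval t h * MvPolynomial.eval t (chebInterp d M μ ν h)|) ''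
    Set.Icc μ ν)

lemma mem_spectrum_iff_mulVec {N : ℕ} {A : Matrix (Fin N) (Fin N) ℂ} {β : ℂ} :
    β ∈ spectrum ℂ A ↔ ∃ v, v ≠ 0 ∧ A.mulVec v = β • v := by
  rw [spectrum.mem_iff, Matrix.isUnit_iff_isUnit_det, isUnit_iff_ne_zero, not_not,
    ← Matrix.exists_mulVec_eq_zero_iff]
  constructor
  · rintro ⟨v, hv, h0⟩
    refine ⟨v, hv, ?_⟩
    have h1 : (algebraMap ℂ (Matrix (Fin N) (Fin N) ℂ) β - A).mulVec v =
        β • v - A.mulVec v := by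
      rw [Matrix.sub_mulVec, Algebra.algebraMap_eq_smul_one, Matrix.smul_mulVec,
        Matrix.one_mulVec]
    rw [h1] at h0
    exact (sub_eq_zero.mp h0).symm
  · rintro ⟨v, hv, h0⟩
    refine ⟨v, hv, ?_⟩
    rw [Matrix.sub_mulVec, Algebra.algebraMap_eq_smul_one, Matrix.smul_mulVec,
      Matrix.one_mulVec, h0, sub_self]

lemma pow_mulVec_eigen {N : ℕ} {B : Matrix (Fin N) (Fin N) ℂ} {c : ℂ} {v : Fin N → ℂ}
    (hv : B.mulVec v = c • v) (n : ℕ) : (B ^ n).mulVec v = c ^ n • v := by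
  induction n with
  | zero => simp [Matrix.one_mulVec]
  | succ n ih =>
    rw [pow_succ', pow_succ', ← Matrix.mulVec_mulVec, ih, Matrix.mulVec_smul, hv,
      smul_smul, mul_comm]

lemma listprod_mulVec_eigen {N : ℕ} {v : Fin N → ℂ} :
    ∀ (n : ℕ) (f : Fin n → Matrix (Fin N) (Fin N) ℂ) (c : Fin n → ℂ),
    (∀ k, (f k).mulVec v = c k • v) →
    (List.ofFn f).prod.mulVec v = (∏ k, c k) • v := by
  intro n
  induction n with
  | zero => intro f c _; simp [Matrix.one_mulVec]
  | succ n ih =>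
    intro f c hf
    rw [List.ofFn_succ, List.prod_cons, ← Matrix.mulVec_mulVec,
      ih (fun k => f k.succ) (fun k => c k.succ) (fun k => hf k.succ),
      Matrix.mulVec_smul, hf 0, Fin.prod_univ_succ, smul_smul, mul_comm]

lemma finsum_mulVec {α : Type*} {N : ℕ} (s : Finset α) (f : α → Matrix (Fin N) (Fin N) ℂ)
    (v : Fin N → ℂ) : (∑ i ∈ s, f i) *ᵥ v = ∑ i ∈ s, f i *ᵥ v := by
  induction s using Finset.cons_induction with
  | empty => simp [Matrix.zero_mulVec]
  | cons a s ha ih => simp [Finset.sum_cons, Matrix.add_mulVec, ih]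

lemma mvEvalMat_mulVec_eigen {d N : ℕ} {S : Fin d → Matrix (Fin N) (Fin N) ℂ}
    (p : MvPolynomial (Fin d) ℝ) (χ : Fin d → ℂ) (v : Fin N → ℂ)
    (hv : ∀ k, (S k).mulVec v = χ k • v) :
    (mvEvalMat p S).mulVec v = (MvPolynomial.aeval χ p) • v := by
  rw [mvEvalMat, finsum_mulVec, MvPolynomial.aeval_def, MvPolynomial.eval₂_eq']
  rw [Finset.sum_smul]
  refine Finset.sum_congr rfl fun m hm => ?_
  rw [Matrix.smul_mulVec,
    listprod_mulVec_eigen d (fun k => S k ^ m k) (fun k => χ k ^ m k)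
      (fun k => pow_mulVec_eigen (hv k) (m k)),
    smul_smul]
  rfl

lemma mvEvalMat_isHermitian {d N : ℕ} {S : Fin d → Matrix (Fin N) (Fin N) ℂ}
    (hcomm : ∀ k k', S k * S k' = S k' * S k) (hherm : ∀ k, (S k).IsHermitian)
    (p : MvPolynomial (Fin d) ℝ) : (mvEvalMat p S).IsHermitian := by
  unfold Matrix.IsHermitian
  rw [mvEvalMat, Matrix.conjTranspose_sum]
  refine Finset.sum_congr rfl fun m _ => ?_
  rw [Matrix.conjTranspose_smul, Matrix.conjTranspose_list_prod]
  have h1 : (List.ofFn fun k => S k ^ m k).map Matrix.conjTranspose =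
      List.ofFn fun k => S k ^ m k := by
    rw [List.map_ofFn]
    congr 1
    funext k
    exact ((hherm k).pow (m k))
  have hpc : (List.ofFn fun k => S k ^ m k).Pairwise Commute := by
    rw [List.pairwise_ofFn]
    intro i j _
    exact Commute.pow_pow (hcomm i j) _ _
  have hpc' : ((List.ofFn fun k => S k ^ m k).reverse).Pairwise Commute := by
    rw [List.pairwise_reverse]
    exact hpc.imp fun h => h.symm
  have h2 : ((List.ofFn fun k => S k ^ m k).reverse).prod =
      (List.ofFn fun k => S k ^ m k).prod :=
    ((List.ofFn fun k => S k ^ m k).reverse_perm).prod_eq' hpc'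
  rw [h1, h2, Complex.star_def, Complex.conj_ofReal]

lemma mvEvalMat_commute {d N : ℕ} {S : Fin d → Matrix (Fin N) (Fin N) ℂ}
    (hcomm : ∀ k k', S k * S k' = S k' * S k) (p q : MvPolynomial (Fin d) ℝ) :
    Commute (mvEvalMat p S) (mvEvalMat q S) := by
  rw [mvEvalMat, mvEvalMat]
  refine Commute.sum_left _ _ _ fun m _ => Commute.sum_right _ _ _ fun m' _ => ?_
  refine Commute.smul_left (Commute.smul_right ?_ _) _
  refine Commute.list_prod_right _ _ fun y hy => ?_
  refine Commute.list_prod_left _ _ fun z hz => ?_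
  obtain ⟨k, rfl⟩ := List.mem_ofFn.mp hy
  obtain ⟨k', rfl⟩ := List.mem_ofFn.mp hz
  exact (Commute.pow_pow (hcomm k' k) _ _)

lemma aeval_ofReal_pt {d : ℕ} (t : Fin d → ℝ) (h : MvPolynomial (Fin d) ℝ) :
    MvPolynomial.aeval (fun k => ((t k : ℝ) : ℂ)) h = ((MvPolynomial.eval t h : ℝ) : ℂ) := by
  have h1 := MvPolynomial.eval₂_comp_left Complex.ofRealHom (RingHom.id ℝ) t h
  rw [MvPolynomial.aeval_def]
  have h2 : MvPolynomial.eval t h = MvPolynomial.eval₂ (RingHom.id ℝ) t h := rfl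
  rw [h2]
  rw [show ((MvPolynomial.eval₂ (RingHom.id ℝ) t h : ℝ) : ℂ) =
    Complex.ofRealHom (MvPolynomial.eval₂ (RingHom.id ℝ) t h) from rfl, h1, RingHom.comp_id]
  have h3 : (algebraMap ℝ ℂ) = Complex.ofRealHom := by ext x; simp
  rw [h3]
  rfl

lemma key_spectrum {d N : ℕ} (μ ν : Fin d → ℝ)
    (S : Fin d → Matrix (Fin N) (Fin N) ℂ)
    (hcomm : ∀ k k', S k * S k' = S k' * S k)
    (hherm : ∀ k, (S k).IsHermitian)
    (hspec : ∀ k, spectrum ℂ (S k) ⊆ (fun x : ℝ => (x : ℂ)) '' Set.Icc (μ k) (ν k))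
    (h p : MvPolynomial (Fin d) ℝ) {β : ℂ}
    (hβ : β ∈ spectrum ℂ ((1 : Matrix (Fin N) (Fin N) ℂ) - mvEvalMat p S * mvEvalMat h S)) :
    ∃ t ∈ Set.Icc μ ν,
      β = ((1 - MvPolynomial.eval t h * MvPolynomial.eval t p : ℝ) : ℂ) := by
  by_contra hcon
  push_neg at hcon
  set A := (1 : Matrix (Fin N) (Fin N) ℂ) - mvEvalMat p S * mvEvalMat h S with hAdef
  obtain ⟨v, hv0, hAv⟩ := mem_spectrum_iff_mulVec.mp hβ
  classical
  let T : Fin d → Module.End ℂ (EuclideanSpace ℂ (Fin N)) :=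
    fun k => Matrix.toEuclideanLin (S k)
  have hmul : ∀ (B B' : Matrix (Fin N) (Fin N) ℂ),
      (Matrix.toEuclideanLin B) * (Matrix.toEuclideanLin B') =
        Matrix.toEuclideanLin (B * B') := by
    intro B B'
    refine LinearMap.ext fun x => ?_
    show Matrix.toEuclideanLin B (Matrix.toEuclideanLin B' x) = _
    simp [Matrix.toEuclideanLin_apply, Matrix.mulVec_mulVec]
  have hTsym : ∀ k, (T k).IsSymmetric :=
    fun k => Matrix.isHermitian_iff_isSymmetric.mp (hherm k)
  have hTcomm : Pairwise (Function.onFun Commute T) := by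
    intro k k' _
    show T k * T k' = T k' * T k
    show Matrix.toEuclideanLin (S k) * Matrix.toEuclideanLin (S k') =
      Matrix.toEuclideanLin (S k') * Matrix.toEuclideanLin (S k)
    rw [hmul, hmul, hcomm]
  have htop := LinearMap.IsSymmetric.iSup_iInf_eq_top_of_commute hTsym hTcomm
  have hAherm : A.IsHermitian := by
    have h1 : (mvEvalMat p S * mvEvalMat h S).IsHermitian := by
      unfold Matrix.IsHermitian
      rw [Matrix.conjTranspose_mul, mvEvalMat_isHermitian hcomm hherm h,
        mvEvalMat_isHermitian hcomm hherm p]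
      exact (mvEvalMat_commute hcomm h p)
    exact (Matrix.isHermitian_one).sub h1
  have hAsym : (Matrix.toEuclideanLin A).IsSymmetric :=
    Matrix.isHermitian_iff_isSymmetric.mp hAherm
  set vE : EuclideanSpace ℂ (Fin N) := (WithLp.equiv 2 (Fin N → ℂ)).symm v with hvEdef
  have hAvE : (Matrix.toEuclideanLin A) vE = β • vE := by
    rw [hvEdef]; exact congrArg (WithLp.equiv 2 (Fin N → ℂ)).symm hAv
  have hvE : vE ∈ (⨆ χ : Fin d → ℂ, ⨅ k, Module.End.eigenspace (T k) (χ k))ᗮ := by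
    rw [Submodule.mem_orthogonal]
    intro u hu
    refine Submodule.iSup_induction _ (motive := fun u => (inner ℂ u vE : ℂ) = 0) hu ?_
      (inner_zero_left _) (fun a b ha hb => by
        show (inner ℂ (a + b) vE : ℂ) = 0
        rw [inner_add_left, show (inner ℂ a vE : ℂ) = 0 from ha,
          show (inner ℂ b vE : ℂ) = 0 from hb, add_zero])
    intro χ u hu
    by_cases hu0 : u = 0
    · simp [hu0]
    set u' := WithLp.equiv 2 (Fin N → ℂ) u with hu'def
    have hueig : ∀ k, (S k).mulVec u' = χ k • u' := by
      intro k
      have h1 : (T k) u = χ k • u :=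
        Module.End.mem_eigenspace_iff.mp (Submodule.mem_iInf _ |>.mp hu k)
      have h2 := congrArg (WithLp.equiv 2 (Fin N → ℂ)) h1
      exact h2
    have hu'0 : u' ≠ 0 := fun hc => hu0 (by
      have := congrArg (WithLp.equiv 2 (Fin N → ℂ)).symm hc
      simpa [hu'def] using this)
    have hχ : ∀ k, ∃ tk, tk ∈ Set.Icc (μ k) (ν k) ∧ (tk : ℂ) = χ k := by
      intro k
      obtain ⟨tk, htk, h2⟩ := hspec k (mem_spectrum_iff_mulVec.mpr ⟨u', hu'0, hueig k⟩)
      exact ⟨tk, htk, h2⟩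
    choose t ht1 ht2 using hχ
    have hχt : χ = fun k => ((t k : ℝ) : ℂ) := by
      funext k; exact (ht2 k).symm
    have htI : t ∈ Set.Icc μ ν := ⟨fun k => (ht1 k).1, fun k => (ht1 k).2⟩
    have hHu : (mvEvalMat h S).mulVec u' = ((MvPolynomial.eval t h : ℝ) : ℂ) • u' := by
      rw [mvEvalMat_mulVec_eigen h χ u' hueig, hχt, aeval_ofReal_pt]
    have hCu : (mvEvalMat p S).mulVec u' = ((MvPolynomial.eval t p : ℝ) : ℂ) • u' := by
      rw [mvEvalMat_mulVec_eigen p χ u' hueig, hχt, aeval_ofReal_pt]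
    set c : ℝ := 1 - MvPolynomial.eval t h * MvPolynomial.eval t p with hcdef
    have hAu : A.mulVec u' = ((c : ℝ) : ℂ) • u' := by
      rw [hAdef, Matrix.sub_mulVec, Matrix.one_mulVec, ← Matrix.mulVec_mulVec, hHu,
        Matrix.mulVec_smul, hCu, hcdef]
      push_cast
      rw [smul_smul, sub_smul, one_smul]
    have hTAu : (Matrix.toEuclideanLin A) u = ((c : ℝ) : ℂ) • u := by
      apply (WithLp.equiv 2 (Fin N → ℂ)).injective
      exact hAu
    have hsymu := hAsym u vE
    rw [hTAu, hAvE, inner_smul_left, inner_smul_right, Complex.conj_ofReal] at hsymu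
    have hne : ((c : ℝ) : ℂ) ≠ β := fun hc => hcon t htI hc.symm
    have : (((c : ℝ) : ℂ) - β) * (inner ℂ u vE : ℂ) = 0 := by
      rw [sub_mul, hsymu, sub_self]
    rcases mul_eq_zero.mp this with h0 | h0
    · exact absurd (sub_eq_zero.mp h0) hne
    · exact h0
  rw [htop, Submodule.top_orthogonal_eq_bot, Submodule.mem_bot] at hvE
  exact hv0 (by
    have := congrArg (WithLp.equiv 2 (Fin N → ℂ)) hvE
    simpa [hvEdef] using this)

/-- Theorem (exponential convergence of the Chebyshev interpolation polynomial approximation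
algorithm, CIPA): if `b̃_M < 1` then `H = h(S₁,…,S_d)` is invertible and the quasi-Newton
iterates `x⁽ᵐ⁾ = x⁽ᵐ⁻¹⁾ − C_M(S₁,…,S_d)·(H x⁽ᵐ⁻¹⁾ − y)` converge exponentially to `H⁻¹y`. -/
theorem cipa_exponential_convergence {d N M : ℕ} (μ ν : Fin d → ℝ) (hμν : ∀ k, μ k < ν k)
    (S : Fin d → Matrix (Fin N) (Fin N) ℂ)
    (hcomm : ∀ k k', S k * S k' = S k' * S k)
    (hherm : ∀ k, (S k).IsHermitian)
    (hspec : ∀ k, spectrum ℂ (S k) ⊆ (fun x : ℝ => (x : ℂ)) '' Set.Icc (μ k) (ν k))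
    (h : MvPolynomial (Fin d) ℝ)
    (hh : ∀ t ∈ Set.Icc μ ν, MvPolynomial.eval t h ≠ 0)
    (H C : Matrix (Fin N) (Fin N) ℂ)
    (hH : H = mvEvalMat h S)
    (hC : C = mvEvalMat (chebInterp d M μ ν h) S)
    (hb : bTilde d M μ ν h < 1) :
    IsUnit H ∧
      ∀ (y x0 : Fin N → ℂ) (x : ℕ → Fin N → ℂ),
        x 0 = x0 →
        (∀ m : ℕ, x (m + 1) = x m - C.mulVec (H.mulVec (x m) - y)) →
        ∀ r : ℝ, specRad (1 - C * H) < r → r < 1 →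
          ∃ C' > (0 : ℝ), ∀ m : ℕ,
            enorm2 (x m - H⁻¹.mulVec y) ≤ C' * r ^ m * enorm2 (x0 - H⁻¹.mulVec y) := by
  classical
  set p := chebInterp d M μ ν h with hp
  have hcont : Continuous fun t : Fin d → ℝ =>
      |1 - MvPolynomial.eval t h * MvPolynomial.eval t p| :=
    (continuous_const.sub ((MvPolynomial.continuous_eval (p := h)).mul
      (MvPolynomial.continuous_eval (p := p)))).abs
  have hcomp : IsCompact (Set.Icc μ ν) := isCompact_Icc
  have hbdd : BddAbove ((fun t => |1 - MvPolynomial.eval t h * MvPolynomial.eval t p|) ''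
      Set.Icc μ ν) := (hcomp.image hcont).bddAbove
  have hle : ∀ t ∈ Set.Icc μ ν,
      |1 - MvPolynomial.eval t h * MvPolynomial.eval t p| ≤ bTilde d M μ ν h :=
    fun t ht => le_csSup hbdd ⟨t, ht, rfl⟩
  set A := (1 : Matrix (Fin N) (Fin N) ℂ) - C * H with hAdef
  have hkey : ∀ β ∈ spectrum ℂ A, ∃ t ∈ Set.Icc μ ν,
      β = ((1 - MvPolynomial.eval t h * MvPolynomial.eval t p : ℝ) : ℂ) := by
    intro β hβ
    refine key_spectrum μ ν S hcomm hherm hspec h p ?_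
    rw [hAdef, hC, hH] at hβ
    exact hβ
  have h1A : (1 : ℂ) ∉ spectrum ℂ A := by
    intro h1
    obtain ⟨t, ht, he⟩ := hkey 1 h1
    have he' : (1 : ℝ) = 1 - MvPolynomial.eval t h * MvPolynomial.eval t p := by
      exact_mod_cast he
    have hb1 : (1 : ℝ) ≤ bTilde d M μ ν h := by
      have := hle t ht
      rw [← he'] at this
      simpa using this
    linarith
  have hCHunit : IsUnit (C * H) := by
    have h2 := spectrum.notMem_iff.mp h1A
    rwa [_root_.map_one, hAdef, sub_sub_cancel] at h2
  have hHunit : IsUnit H := by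
    have hd := (Matrix.isUnit_iff_isUnit_det _).mp hCHunit
    rw [Matrix.det_mul] at hd
    exact (Matrix.isUnit_iff_isUnit_det H).mpr (isUnit_of_mul_isUnit_right hd)
  refine ⟨hHunit, ?_⟩
  intro y x0 xseq hx0 hrec r hr1 hr2
  have hAherm : A.IsHermitian := by
    rw [hAdef, hC, hH]
    refine Matrix.IsHermitian.sub Matrix.isHermitian_one ?_
    unfold Matrix.IsHermitian
    rw [Matrix.conjTranspose_mul, mvEvalMat_isHermitian hcomm hherm h,
      mvEvalMat_isHermitian hcomm hherm p]
    exact mvEvalMat_commute hcomm h p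
  set a := Matrix.toEuclideanCLM (𝕜 := ℂ) A with hadef
  have hsaA : IsSelfAdjoint A := hAherm
  have hsa : IsSelfAdjoint a := by
    rw [hadef]
    exact hsaA.map _
  have hspec_eq : spectrum ℂ a = spectrum ℂ A :=
    AlgEquiv.spectrum_eq (Matrix.toEuclideanCLM (𝕜 := ℂ) (n := Fin N)) A
  have hr0 : (0 : ℝ) ≤ specRad A :=
    Real.sSup_nonneg (by rintro x ⟨β, _, rfl⟩; exact norm_nonneg β)
  have hbub : ∀ β ∈ spectrum ℂ A, ‖β‖ ≤ specRad A := by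
    intro β hβ
    refine le_csSup ?_ ⟨β, hβ, rfl⟩
    refine BddAbove.mono ?_ hbdd
    rintro x ⟨γ, hγ, rfl⟩
    obtain ⟨t, ht, rfl⟩ := hkey γ hγ
    exact ⟨t, ht, by simp only [Complex.norm_real, Real.norm_eq_abs]⟩
  have hanorm : ‖a‖ ≤ specRad A := by
    have h1 : spectralRadius ℂ a ≤ ENNReal.ofReal (specRad A) := by
      rw [spectralRadius]
      refine iSup₂_le fun k hk => ?_
      rw [← enorm_eq_nnnorm, ← ofReal_norm]
      refine ENNReal.ofReal_le_ofReal ?_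
      exact hbub k (hspec_eq ▸ hk)
    rw [hsa.spectralRadius_eq_nnnorm, ← enorm_eq_nnnorm, ← ofReal_norm] at h1
    exact (ENNReal.ofReal_le_ofReal_iff hr0).mp h1
  have hdet : IsUnit H.det := (Matrix.isUnit_iff_isUnit_det H).mp hHunit
  set z := H⁻¹.mulVec y with hz
  have hHz : H.mulVec z = y := by
    rw [hz, Matrix.mulVec_mulVec, Matrix.mul_nonsing_inv _ hdet, Matrix.one_mulVec]
  have herr : ∀ m, xseq m - z = (A ^ m).mulVec (x0 - z) := by
    intro m
    induction m with
    | zero => rw [pow_zero, Matrix.one_mulVec, hx0]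
    | succ m ih =>
      rw [hrec m, pow_succ', ← Matrix.mulVec_mulVec, ← ih, hAdef]
      have hHsub : H.mulVec (xseq m - z) = H.mulVec (xseq m) - y := by
        rw [Matrix.mulVec_sub, hHz]
      rw [Matrix.sub_mulVec, Matrix.one_mulVec, ← Matrix.mulVec_mulVec (xseq m - z) C H, hHsub]
      abel
  have henorm : ∀ w : Fin N → ℂ, enorm2 w = ‖(WithLp.equiv 2 (Fin N → ℂ)).symm w‖ := by
    intro w
    rw [EuclideanSpace.norm_eq, enorm2]
    congr 1
  refine ⟨1, one_pos, fun m => ?_⟩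
  rw [henorm, henorm, herr m]
  set v0 := (WithLp.equiv 2 (Fin N → ℂ)).symm (x0 - z) with hv0def
  have hCLM : (WithLp.equiv 2 (Fin N → ℂ)).symm ((A ^ m) *ᵥ (x0 - z)) = (a ^ m) v0 := by
    rw [hadef, ← map_pow, hv0def]; rfl
  rw [hCLM]
  have hbound : ‖(a ^ m) v0‖ ≤ ‖a ^ m‖ * ‖v0‖ := ContinuousLinearMap.le_opNorm _ _
  have hpow : ‖a ^ m‖ ≤ r ^ m := by
    cases m with
    | zero =>
      rw [pow_zero, pow_zero]
      exact ContinuousLinearMap.norm_id_le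
    | succ m =>
      refine le_trans (norm_pow_le' a (Nat.succ_pos m)) ?_
      exact pow_le_pow_left₀ (norm_nonneg a) (le_trans hanorm hr1.le) _
  calc ‖(a ^ m) v0‖ ≤ ‖a ^ m‖ * ‖v0‖ := hbound
    _ ≤ r ^ m * ‖v0‖ := mul_le_mul_of_nonneg_right hpow (norm_nonneg _)
    _ = 1 * r ^ m * ‖v0‖ := by ring
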